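/- Let a, b, r ∈ ℂ with a ≠ 0. Define the vector fields f, g₁, g₂, g₃ : ℂ⁶ → ℂ⁶ by f(S,E,I,X,Y,Z) = (-r·S·I, r·S·I - b·E, b·E - a·I, -r·I·X, -(r·b/a)·E·Y, -(r²/a)·S·I·Z), g₁(S,E,I,X,Y,Z) = (0,0,0,X,0,0), g₂(S,E,I,X,Y,Z) = (0,0,0,0,Y,0), g₃(S,E,I,X,Y,Z) = (0,0,0,0,0,Z). Then the four vector fields f, g₁, g₂, g₃ pairwise commute: for every pair u, v among them and every x ∈ ℂ⁶, [u,v](x) := Dv(x)·u(x) − Du(x)·v(x) = 0, where Du(x) denotes the (Fréchet) derivative of u at x. -/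

import Mathlib

/-- The extended SEIR vector field on `ℂ⁶`. -/
noncomputable def extSeirField (a b r : ℂ) (x : ℂ × ℂ × ℂ × ℂ × ℂ × ℂ) :
    ℂ × ℂ × ℂ × ℂ × ℂ × ℂ :=
  (-r * x.1 * x.2.2.1,
   r * x.1 * x.2.2.1 - b * x.2.1,
   b * x.2.1 - a * x.2.2.1,
   -r * x.2.2.1 * x.2.2.2.1,
   -(r * b / a) * x.2.1 * x.2.2.2.2.1,
   -(r ^ 2 / a) * x.1 * x.2.2.1 * x.2.2.2.2.2)

/-- `g₁(S,E,I,X,Y,Z) = (0,0,0,X,0,0)`. -/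
def gX (x : ℂ × ℂ × ℂ × ℂ × ℂ × ℂ) : ℂ × ℂ × ℂ × ℂ × ℂ × ℂ :=
  (0, 0, 0, x.2.2.2.1, 0, 0)

/-- `g₂(S,E,I,X,Y,Z) = (0,0,0,0,Y,0)`. -/
def gY (x : ℂ × ℂ × ℂ × ℂ × ℂ × ℂ) : ℂ × ℂ × ℂ × ℂ × ℂ × ℂ :=
  (0, 0, 0, 0, x.2.2.2.2.1, 0)

/-- `g₃(S,E,I,X,Y,Z) = (0,0,0,0,0,Z)`. -/
def gZ (x : ℂ × ℂ × ℂ × ℂ × ℂ × ℂ) : ℂ × ℂ × ℂ × ℂ × ℂ × ℂ :=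
  (0, 0, 0, 0, 0, x.2.2.2.2.2)

/- Auxiliary material: explicit derivatives of the four vector fields. -/

abbrev V6 := ℂ × ℂ × ℂ × ℂ × ℂ × ℂ

open ContinuousLinearMap

noncomputable def pS : V6 →L[ℂ] ℂ := fst ℂ ℂ _
noncomputable def p2 : V6 →L[ℂ] (ℂ × ℂ × ℂ × ℂ × ℂ) := snd ℂ ℂ _
noncomputable def pE : V6 →L[ℂ] ℂ := (fst ℂ ℂ _).comp p2
noncomputable def p3 := (snd ℂ ℂ (ℂ × ℂ × ℂ × ℂ)).comp p2
noncomputable def pI : V6 →L[ℂ] ℂ := (fst ℂ ℂ _).comp p3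
noncomputable def p4 := (snd ℂ ℂ (ℂ × ℂ × ℂ)).comp p3
noncomputable def pX : V6 →L[ℂ] ℂ := (fst ℂ ℂ _).comp p4
noncomputable def p5 := (snd ℂ ℂ (ℂ × ℂ)).comp p4
noncomputable def pY : V6 →L[ℂ] ℂ := (fst ℂ ℂ _).comp p5
noncomputable def pZ : V6 →L[ℂ] ℂ := (snd ℂ ℂ ℂ).comp p5

noncomputable def Dseir (a b r : ℂ) (x : V6) : V6 →L[ℂ] V6 :=
  (((-r * x.1) • pI + x.2.2.1 • ((-r) • pS)).prod
  ((((r * x.1) • pI + x.2.2.1 • (r • pS)) - b • pE).prod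
  ((b • pE - a • pI).prod
  (((-r * x.2.2.1) • pX + x.2.2.2.1 • ((-r) • pI)).prod
  (((-(r * b / a) * x.2.1) • pY + x.2.2.2.2.1 • ((-(r * b / a)) • pE)).prod
  ((-(r ^ 2 / a) * x.1 * x.2.2.1) • pZ +
    x.2.2.2.2.2 • ((-(r ^ 2 / a) * x.1) • pI + x.2.2.1 • ((-(r ^ 2 / a)) • pS))))))))

lemma hasFDeriv_seir (a b r : ℂ) (x : V6) :
    HasFDerivAt (extSeirField a b r) (Dseir a b r x) x := by
  have hS : HasFDerivAt (fun y : V6 => y.1) pS x := pS.hasFDerivAt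
  have hE : HasFDerivAt (fun y : V6 => y.2.1) pE x := pE.hasFDerivAt
  have hI : HasFDerivAt (fun y : V6 => y.2.2.1) pI x := pI.hasFDerivAt
  have hX : HasFDerivAt (fun y : V6 => y.2.2.2.1) pX x := pX.hasFDerivAt
  have hY : HasFDerivAt (fun y : V6 => y.2.2.2.2.1) pY x := pY.hasFDerivAt
  have hZ : HasFDerivAt (fun y : V6 => y.2.2.2.2.2) pZ x := pZ.hasFDerivAt
  exact HasFDerivAt.prodMk ((hS.const_mul (-r)).mul hI)
    (HasFDerivAt.prodMk (HasFDerivAt.sub ((hS.const_mul r).mul hI) (hE.const_mul b))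
    (HasFDerivAt.prodMk ((hE.const_mul b).sub (hI.const_mul a))
    (HasFDerivAt.prodMk ((hI.const_mul (-r)).mul hX)
    (HasFDerivAt.prodMk ((hE.const_mul (-(r * b / a))).mul hY)
    (HasFDerivAt.mul ((hS.const_mul (-(r ^ 2 / a))).mul hI) hZ)))))

noncomputable def LX : V6 →L[ℂ] V6 :=
  (0 : V6 →L[ℂ] ℂ).prod ((0 : V6 →L[ℂ] ℂ).prod ((0 : V6 →L[ℂ] ℂ).prod
    (pX.prod ((0 : V6 →L[ℂ] ℂ).prod (0 : V6 →L[ℂ] ℂ)))))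
noncomputable def LY : V6 →L[ℂ] V6 :=
  (0 : V6 →L[ℂ] ℂ).prod ((0 : V6 →L[ℂ] ℂ).prod ((0 : V6 →L[ℂ] ℂ).prod
    ((0 : V6 →L[ℂ] ℂ).prod (pY.prod (0 : V6 →L[ℂ] ℂ)))))
noncomputable def LZ : V6 →L[ℂ] V6 :=
  (0 : V6 →L[ℂ] ℂ).prod ((0 : V6 →L[ℂ] ℂ).prod ((0 : V6 →L[ℂ] ℂ).prod
    ((0 : V6 →L[ℂ] ℂ).prod ((0 : V6 →L[ℂ] ℂ).prod pZ))))

lemma hasFDeriv_gX (x : V6) : HasFDerivAt gX LX x := LX.hasFDerivAt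
lemma hasFDeriv_gY (x : V6) : HasFDerivAt gY LY x := LY.hasFDerivAt
lemma hasFDeriv_gZ (x : V6) : HasFDerivAt gZ LZ x := LZ.hasFDerivAt

/-- The extended SEIR vector field and the three vector fields `g₁, g₂, g₃`
pairwise commute under the Lie bracket `[u,v](x) = Dv(x)·u(x) − Du(x)·v(x)`. -/
theorem extended_seir_commuting_fields (a b r : ℂ) (ha : a ≠ 0) :
    ∀ u v : (ℂ × ℂ × ℂ × ℂ × ℂ × ℂ) → ℂ × ℂ × ℂ × ℂ × ℂ × ℂ,
      u ∈ ({extSeirField a b r, gX, gY, gZ} :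
        Set ((ℂ × ℂ × ℂ × ℂ × ℂ × ℂ) → ℂ × ℂ × ℂ × ℂ × ℂ × ℂ)) →
      v ∈ ({extSeirField a b r, gX, gY, gZ} :
        Set ((ℂ × ℂ × ℂ × ℂ × ℂ × ℂ) → ℂ × ℂ × ℂ × ℂ × ℂ × ℂ)) →
      ∀ x : ℂ × ℂ × ℂ × ℂ × ℂ × ℂ,
        fderiv ℂ v x (u x) - fderiv ℂ u x (v x) = 0 := by
  intro u v hu hv x
  simp only [Set.mem_insert_iff, Set.mem_singleton_iff] at hu hv
  rcases hu with rfl | rfl | rfl | rfl <;> rcases hv with rfl | rfl | rfl | rfl <;>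
    simp only [(hasFDeriv_seir a b r x).fderiv, (hasFDeriv_gX x).fderiv,
      (hasFDeriv_gY x).fderiv, (hasFDeriv_gZ x).fderiv] <;>
    simp only [Dseir, LX, LY, LZ, pS, pE, pI, pX, pY, pZ, p2, p3, p4, p5,
      extSeirField, gX, gY, gZ, ContinuousLinearMap.prod_apply,
      ContinuousLinearMap.add_apply, ContinuousLinearMap.sub_apply,
      ContinuousLinearMap.smul_apply, ContinuousLinearMap.comp_apply,
      ContinuousLinearMap.coe_fst', ContinuousLinearMap.coe_snd',
      ContinuousLinearMap.zero_apply, smul_eq_mul, Prod.mk_sub_mk,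
      Prod.mk_eq_zero] <;>
    refine ⟨?_, ?_, ?_, ?_, ?_, ?_⟩ <;> ring
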